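/- Let (W,S) be a countably generated Coxeter system and let {w_i}_{i∈I} be an ascending chain in W̄ under the weak order. Then the join ⋁_i w_i exists in W̄ and its inversion set satisfies Φ_{⋁_i w_i} = ⋃_{i∈I} Φ_{w_i}. -/

import Mathlib

namespace CoxInf

variable {B : Type*} {W : Type*} [Group W] {M : CoxeterMatrix B}

/-- The inversion set `Φ_w` of `w⁻¹`, encoded via the canonical bijection between the
positive roots and the reflections: it corresponds to the set of left inversions of `w`. -/
def invSet (cs : CoxeterSystem M W) (w : W) : Set W :=
  {t | cs.IsLeftInversion w t}

/-- The length-`n` prefix of an infinite word in the generators. -/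
def prefixWord (ω : ℕ → B) (n : ℕ) : List B := List.ofFn fun i : Fin n => ω i

/-- `ω` is an infinite reduced expression: every finite prefix is reduced. -/
def IsInfRedExpr (cs : CoxeterSystem M W) (ω : ℕ → B) : Prop :=
  ∀ n, cs.IsReduced (prefixWord ω n)

/-- The elements of `W̄ = W ⊎ W_l`, represented as finite elements together with
infinite reduced expressions (an infinite reduced word is an equivalence class of
infinite reduced expressions having the same inversion set). -/
def barInv (cs : CoxeterSystem M W) : W ⊕ {ω : ℕ → B // IsInfRedExpr cs ω} → Set W
  | .inl w => invSet cs w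
  | .inr ω => ⋃ n, invSet cs (cs.wordProd (prefixWord ω.1 n))

end CoxInf

namespace CoxInfAux
open List
open scoped Classical

variable {B : Type*} {W : Type*} [Group W] {M : CoxeterMatrix B} (cs : CoxeterSystem M W)

lemma zmod2_add_self : ∀ x : ZMod 2, x + x = 0 := by decide

lemma conj_eq_iff {a t u : W} : a * t * a⁻¹ = u ↔ t = a⁻¹ * u * a := by
  constructor
  · rintro rfl; group
  · rintro rfl; group

lemma simple_mul_eq_iff (j : B) (t x : W) : cs.simple j * t = x ↔ t = cs.simple j * x := by
  constructor
  · rintro rfl; rw [← mul_assoc, cs.simple_mul_simple_self, one_mul]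
  · rintro rfl; rw [← mul_assoc, cs.simple_mul_simple_self, one_mul]

lemma simple_conj_eq_iff (i : B) (t u : W) :
    cs.simple i * t * cs.simple i = u ↔ t = cs.simple i * u * cs.simple i := by
  nth_rw 2 [← cs.inv_simple i]
  rw [conj_eq_iff, cs.inv_simple]

/-- The function underlying the Tits permutation of `W × ZMod 2`. -/
noncomputable def titsFun (i : B) : W × ZMod 2 → W × ZMod 2 :=
  fun p => (cs.simple i * p.1 * cs.simple i, p.2 + if p.1 = cs.simple i then 1 else 0)

lemma titsFun_invol (i : B) (p : W × ZMod 2) : titsFun cs i (titsFun cs i p) = p := by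
  obtain ⟨t, e⟩ := p
  have hfst : cs.simple i * (cs.simple i * t * cs.simple i) * cs.simple i = t := by
    rw [simple_conj_eq_iff]
  have hcond : (cs.simple i * t * cs.simple i = cs.simple i) ↔ t = cs.simple i := by
    rw [simple_conj_eq_iff]
    simp [cs.simple_mul_simple_cancel_left]
  unfold titsFun
  simp only [hfst]
  by_cases h : t = cs.simple i
  · simp [h, hcond.mpr h, add_assoc, zmod2_add_self]
  · simp [h, hcond, add_assoc]

/-- The Tits permutation of `W × ZMod 2` attached to a simple generator. -/
noncomputable def titsPerm (i : B) : Equiv.Perm (W × ZMod 2) where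
  toFun := titsFun cs i
  invFun := titsFun cs i
  left_inv := titsFun_invol cs i
  right_inv := titsFun_invol cs i

lemma titsPerm_apply (i : B) (t : W) (e : ZMod 2) :
    titsPerm cs i (t, e) = (cs.simple i * t * cs.simple i,
      e + if t = cs.simple i then 1 else 0) := rfl

lemma doubling_sum (g : ℕ → ZMod 2) (m : ℕ) :
    ∑ l ∈ Finset.range m, (g (2 * l) + g (2 * l + 1)) = ∑ j ∈ Finset.range (2 * m), g j := by
  induction m with
  | zero => simp
  | succ m ih =>
    rw [Finset.sum_range_succ, ih, mul_add, mul_one]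
    rw [show 2 * m + 2 = (2 * m + 1) + 1 from rfl, Finset.sum_range_succ, Finset.sum_range_succ]
    ring

lemma titsPerm_liftable : M.IsLiftable (fun i => titsPerm cs i) := by
  intro i j
  obtain ⟨p, hp⟩ : ∃ p : W, p = cs.simple i * cs.simple j := ⟨_, rfl⟩
  obtain ⟨m, hm⟩ : ∃ m : ℕ, m = M i j := ⟨_, rfl⟩
  have hpm : p ^ m = 1 := by rw [hp, hm]; exact cs.simple_mul_simple_pow i j
  have hconj1 : cs.simple j * p * cs.simple j = p⁻¹ := by
    rw [hp, mul_inv_rev, cs.inv_simple, cs.inv_simple]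
    rw [mul_assoc, mul_assoc, cs.simple_mul_simple_self, mul_one]
  have hconj : ∀ k : ℕ, cs.simple j * p ^ k * cs.simple j = (p ^ k)⁻¹ := by
    intro k
    induction k with
    | zero => simp
    | succ k ih =>
      calc cs.simple j * p ^ (k + 1) * cs.simple j
          = (cs.simple j * p * cs.simple j) * (cs.simple j * p ^ k * cs.simple j) := by
            rw [pow_succ']
            simp only [mul_assoc, cs.simple_mul_simple_cancel_left]
        _ = p⁻¹ * (p ^ k)⁻¹ := by rw [ih, hconj1]
        _ = (p ^ (k + 1))⁻¹ := by rw [← mul_inv_rev, ← pow_succ]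
  have hconj' : ∀ k : ℕ, (p ^ k)⁻¹ * cs.simple j = cs.simple j * p ^ k := by
    intro k
    rw [← hconj k, mul_assoc, mul_assoc, cs.simple_mul_simple_self, mul_one]
  have hK1 : ∀ l : ℕ, (p ^ l)⁻¹ * cs.simple j * p ^ l = cs.simple j * p ^ (2 * l) := by
    intro l
    rw [hconj', mul_assoc, ← pow_add, two_mul]
  have hji : cs.simple j * cs.simple i * cs.simple j = p⁻¹ * cs.simple j := by
    rw [hp, mul_inv_rev, cs.inv_simple, cs.inv_simple, mul_assoc]
  have hK2 : ∀ l : ℕ, (p ^ l)⁻¹ * (cs.simple j * cs.simple i * cs.simple j) * p ^ l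
      = cs.simple j * p ^ (2 * l + 1) := by
    intro l
    rw [hji]
    have : (p ^ l)⁻¹ * (p⁻¹ * cs.simple j) * p ^ l = (p ^ (l + 1))⁻¹ * cs.simple j * p ^ l := by
      rw [pow_succ, mul_inv_rev]; group
    rw [this, hconj', mul_assoc, ← pow_add]
    congr 2
    omega
  have happ : ∀ (t : W) (e : ZMod 2), (titsPerm cs i * titsPerm cs j) (t, e)
      = (p * t * p⁻¹, e + ((if t = cs.simple j then (1 : ZMod 2) else 0)
          + (if t = cs.simple j * cs.simple i * cs.simple j then (1 : ZMod 2) else 0))) := by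
    intro t e
    show titsPerm cs i (titsPerm cs j (t, e)) = _
    rw [titsPerm_apply, titsPerm_apply]
    have h1 : cs.simple i * (cs.simple j * t * cs.simple j) * cs.simple i = p * t * p⁻¹ := by
      rw [hp, mul_inv_rev, cs.inv_simple, cs.inv_simple]
      group
    have h2 : (cs.simple j * t * cs.simple j = cs.simple i)
        ↔ (t = cs.simple j * cs.simple i * cs.simple j) := by
      rw [simple_conj_eq_iff]
    rw [Prod.mk.injEq]
    refine ⟨h1, ?_⟩
    by_cases hc : cs.simple j * t * cs.simple j = cs.simple i
    · rw [if_pos hc, if_pos (h2.mp hc)]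
      ring
    · rw [if_neg hc, if_neg (fun hh => hc (h2.mpr hh))]
      ring
  have key : ∀ (k : ℕ) (t : W) (e : ZMod 2),
      ((titsPerm cs i * titsPerm cs j) ^ k) (t, e)
        = (p ^ k * t * (p ^ k)⁻¹,
            e + ∑ l ∈ Finset.range k,
              ((if p ^ l * t * (p ^ l)⁻¹ = cs.simple j then (1 : ZMod 2) else 0)
                + (if p ^ l * t * (p ^ l)⁻¹ = cs.simple j * cs.simple i * cs.simple j
                    then (1 : ZMod 2) else 0))) := by
    intro k
    induction k with
    | zero => intro t e; simp
    | succ k ih =>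
      intro t e
      rw [pow_succ']
      have hstep : ((titsPerm cs i * titsPerm cs j) * (titsPerm cs i * titsPerm cs j) ^ k) (t, e)
          = (titsPerm cs i * titsPerm cs j) (((titsPerm cs i * titsPerm cs j) ^ k) (t, e)) := rfl
      rw [hstep, ih, happ, Finset.sum_range_succ, Prod.mk.injEq]
      constructor
      · rw [pow_succ', mul_inv_rev]
        group
      · rw [add_assoc]
  have hfinal : ∀ (t : W) (e : ZMod 2),
      ((titsPerm cs i * titsPerm cs j) ^ m) (t, e) = (t, e) := by
    intro t e
    rw [key m t e, hpm]
    have hsummand : ∀ l : ℕ,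
        ((if p ^ l * t * (p ^ l)⁻¹ = cs.simple j then (1 : ZMod 2) else 0)
          + (if p ^ l * t * (p ^ l)⁻¹ = cs.simple j * cs.simple i * cs.simple j
              then (1 : ZMod 2) else 0))
        = ((if cs.simple j * t = p ^ (2 * l) then (1 : ZMod 2) else 0)
            + (if cs.simple j * t = p ^ (2 * l + 1) then (1 : ZMod 2) else 0)) := by
      intro l
      have c1 : (p ^ l * t * (p ^ l)⁻¹ = cs.simple j) ↔ (cs.simple j * t = p ^ (2 * l)) := by
        rw [conj_eq_iff, hK1, simple_mul_eq_iff]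
      have c2 : (p ^ l * t * (p ^ l)⁻¹ = cs.simple j * cs.simple i * cs.simple j)
          ↔ (cs.simple j * t = p ^ (2 * l + 1)) := by
        rw [conj_eq_iff, hK2, simple_mul_eq_iff]
      rw [if_congr c1 rfl rfl, if_congr c2 rfl rfl]
    rw [Finset.sum_congr rfl (fun l _ => hsummand l)]
    rw [doubling_sum (fun n => if cs.simple j * t = p ^ n then (1 : ZMod 2) else 0) m]
    rw [two_mul, Finset.sum_range_add]
    have hshift : ∀ jj : ℕ, (if cs.simple j * t = p ^ (m + jj) then (1 : ZMod 2) else 0)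
        = (if cs.simple j * t = p ^ jj then (1 : ZMod 2) else 0) := by
      intro jj
      rw [pow_add, hpm, one_mul]
    rw [Finset.sum_congr rfl (fun jj _ => hshift jj), zmod2_add_self, add_zero]
    simp
  show (titsPerm cs i * titsPerm cs j) ^ M i j = 1
  rw [← hm]
  apply Equiv.ext
  rintro ⟨t, e⟩
  rw [hfinal t e]
  rfl

/-- The Tits homomorphism `W →* Perm (W × ZMod 2)`. -/
noncomputable def titsHom : W →* Equiv.Perm (W × ZMod 2) :=
  cs.lift ⟨fun i => titsPerm cs i, titsPerm_liftable cs⟩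

@[simp] lemma titsHom_simple (i : B) : titsHom cs (cs.simple i) = titsPerm cs i :=
  cs.lift_apply_simple (titsPerm_liftable cs) i

lemma titsHom_apply (w t : W) (e : ZMod 2) :
    titsHom cs w (t, e) = (w * t * w⁻¹, e + (titsHom cs w (t, 0)).2) := by
  obtain ⟨l, rfl⟩ := cs.wordProd_surjective w
  induction l generalizing t e with
  | nil => simp
  | cons i l ih =>
    rw [cs.wordProd_cons, map_mul]
    have hmul : ∀ q, (titsHom cs (cs.simple i) * titsHom cs (cs.wordProd l)) q
        = titsPerm cs i (titsHom cs (cs.wordProd l) q) := by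
      intro q; rw [titsHom_simple]; rfl
    rw [hmul, hmul, ih t e, ih t 0, titsPerm_apply, titsPerm_apply]
    rw [Prod.mk.injEq]
    constructor
    · rw [mul_inv_rev, cs.inv_simple]
      group
    · ring

/-- The Tits cocycle. -/
noncomputable def nu (w t : W) : ZMod 2 := (titsHom cs w⁻¹ (t, 0)).2

lemma count_leftInvSeq_eq_nu (l : List B) (t : W) :
    (((cs.leftInvSeq l).count t : ℕ) : ZMod 2) = nu cs (cs.wordProd l) t := by
  induction l generalizing t with
  | nil => simp [nu]
  | cons i l ih =>
    have hlis : cs.leftInvSeq (i :: l)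
        = cs.simple i :: (cs.leftInvSeq l).map (MulAut.conj (cs.simple i)) := rfl
    have hconj_self : (MulAut.conj (cs.simple i)) (cs.simple i * t * cs.simple i) = t := by
      simp only [MulAut.conj_apply, cs.inv_simple]
      rw [simple_conj_eq_iff]
    have hmapcount : (List.map (⇑(MulAut.conj (cs.simple i))) (cs.leftInvSeq l)).count t
        = (cs.leftInvSeq l).count (cs.simple i * t * cs.simple i) := by
      conv_lhs => rw [show t = (MulAut.conj (cs.simple i)) (cs.simple i * t * cs.simple i)
        from hconj_self.symm]
      exact List.count_map_of_injective _ _ (MulAut.conj (cs.simple i)).injective _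
    have hcount : (cs.leftInvSeq (i :: l)).count t
        = ((cs.leftInvSeq l).count (cs.simple i * t * cs.simple i)
            + if cs.simple i = t then 1 else 0) := by
      rw [hlis, List.count_cons, hmapcount]
      congr 1
      simp
    have hnu : nu cs (cs.wordProd (i :: l)) t
        = nu cs (cs.wordProd l) (cs.simple i * t * cs.simple i)
          + (if t = cs.simple i then 1 else 0) := by
      unfold nu
      rw [cs.wordProd_cons, mul_inv_rev, cs.inv_simple, map_mul]
      have : (titsHom cs (cs.wordProd l)⁻¹ * titsHom cs (cs.simple i)) (t, 0)
          = titsHom cs (cs.wordProd l)⁻¹ (titsPerm cs i (t, 0)) := by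
        rw [titsHom_simple]; rfl
      rw [this, titsPerm_apply, zero_add,
        titsHom_apply cs ((cs.wordProd l)⁻¹) (cs.simple i * t * cs.simple i)]
      ring
    rw [hcount, hnu, Nat.cast_add, ih]
    congr 1
    by_cases h : cs.simple i = t
    · simp [h]
    · rw [if_neg h, if_neg (fun hh => h hh.symm)]
      simp

lemma leftInvSeq_append (l l' : List B) :
    cs.leftInvSeq (l ++ l')
      = cs.leftInvSeq l ++ (cs.leftInvSeq l').map (MulAut.conj (cs.wordProd l)) := by
  induction l with
  | nil =>
    simp only [List.nil_append, CoxeterSystem.leftInvSeq_nil, cs.wordProd_nil, map_one]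
    rw [show ⇑(1 : MulAut W) = id from rfl, List.map_id]
  | cons i l ih =>
    have h1 : cs.leftInvSeq ((i :: l) ++ l')
        = cs.simple i :: (cs.leftInvSeq (l ++ l')).map (MulAut.conj (cs.simple i)) := rfl
    have h2 : cs.leftInvSeq (i :: l)
        = cs.simple i :: (cs.leftInvSeq l).map (MulAut.conj (cs.simple i)) := rfl
    rw [h1, h2, ih, List.map_append, List.map_map, cs.wordProd_cons, map_mul]
    rfl

lemma nu_self {t : W} (ht : cs.IsReflection t) : nu cs t t = 1 := by
  have hinv : t⁻¹ = t := ht.inv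
  obtain ⟨u, c, htuc⟩ := id ht
  unfold nu
  rw [hinv]
  nth_rw 1 [htuc]
  rw [map_mul, map_mul]
  have happly : ∀ (f g : Equiv.Perm (W × ZMod 2)) q, (f * g) q = f (g q) := fun _ _ _ => rfl
  rw [happly, happly, titsHom_simple]
  have h1 : titsHom cs u⁻¹ (t, 0) = (cs.simple c, (titsHom cs u⁻¹ (t, 0)).2) := by
    rw [titsHom_apply]
    congr 1
    rw [htuc, inv_inv]
    group
  set x := (titsHom cs u⁻¹ (t, 0)).2 with hx
  rw [h1, titsPerm_apply, if_pos rfl]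
  have hsc : cs.simple c * cs.simple c * cs.simple c = cs.simple c := by
    rw [cs.simple_mul_simple_self, one_mul]
  rw [hsc, titsHom_apply]
  have hxy : x + (titsHom cs u (cs.simple c, 0)).2 = 0 := by
    have hcomp : titsHom cs u (titsHom cs u⁻¹ (t, 0)) = (t, 0) := by
      rw [← happly, ← map_mul, mul_inv_cancel, map_one]
      rfl
    rw [h1, titsHom_apply] at hcomp
    have := congrArg Prod.snd hcomp
    simpa using this
  dsimp only
  rw [show x + 1 + (titsHom cs u (cs.simple c, 0)).2
      = x + (titsHom cs u (cs.simple c, 0)).2 + 1 from by ring, hxy, zero_add]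

/-- **Strong exchange** (converse direction): a left inversion of a reduced word
appears in its left inversion sequence. -/
lemma mem_leftInvSeq_of_isLeftInversion {l : List B} (hl : cs.IsReduced l) {t : W}
    (ht : cs.IsLeftInversion (cs.wordProd l) t) : t ∈ cs.leftInvSeq l := by
  obtain ⟨hrefl, hlen⟩ := ht
  obtain ⟨u, c, hc⟩ := id hrefl
  obtain ⟨lu, hlu⟩ : ∃ lu, cs.wordProd lu = u := cs.wordProd_surjective _
  obtain ⟨ψ, hψred, hψ⟩ := cs.exists_reduced_word' (t * cs.wordProd l)
  set tword : List B := lu ++ c :: lu.reverse with htword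
  have hπtword : cs.wordProd tword = t := by
    rw [htword, cs.wordProd_append, cs.wordProd_cons, cs.wordProd_reverse, hlu, hc]
    group
  have hπ : cs.wordProd (tword ++ ψ) = cs.wordProd l := by
    rw [cs.wordProd_append, hπtword, ← hψ, ← mul_assoc, hrefl.mul_self, one_mul]
  have hcast : (((cs.leftInvSeq l).count t : ℕ) : ZMod 2) = 1 := by
    rw [count_leftInvSeq_eq_nu, ← hπ, ← count_leftInvSeq_eq_nu]
    rw [leftInvSeq_append, List.count_append]
    have hcount2 : (List.map (⇑(MulAut.conj (cs.wordProd tword))) (cs.leftInvSeq ψ)).count t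
        = (cs.leftInvSeq ψ).count t := by
      have : (MulAut.conj (cs.wordProd tword)) t = t := by
        rw [hπtword, MulAut.conj_apply, hrefl.mul_self, one_mul, hrefl.inv]
      conv_lhs => rw [show t = (MulAut.conj (cs.wordProd tword)) t from this.symm]
      exact List.count_map_of_injective _ _ (MulAut.conj (cs.wordProd tword)).injective _
    have hcount0 : (cs.leftInvSeq ψ).count t = 0 := by
      rw [List.count_eq_zero]
      intro hmem
      have h2 := (cs.isLeftInversion_of_mem_leftInvSeq hψred hmem).2
      rw [← hψ, ← mul_assoc, hrefl.mul_self, one_mul] at h2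
      exact lt_asymm hlen h2
    rw [hcount2, hcount0, add_zero]
    have := count_leftInvSeq_eq_nu cs tword t
    rw [hπtword] at this
    rw [this, nu_self cs hrefl]
  by_contra hmem
  rw [List.count_eq_zero.mpr hmem] at hcast
  norm_num at hcast

open CoxInf in
lemma invSet_eq_of_isReduced {l : List B} (hl : cs.IsReduced l) :
    invSet cs (cs.wordProd l) = {t | t ∈ cs.leftInvSeq l} := by
  ext t
  exact ⟨fun ht => mem_leftInvSeq_of_isLeftInversion cs hl ht,
    fun ht => cs.isLeftInversion_of_mem_leftInvSeq hl ht⟩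

open CoxInf in
lemma invSet_finite (x : W) : (invSet cs x).Finite := by
  obtain ⟨l, hl, rfl⟩ := cs.exists_reduced_word' x
  rw [invSet_eq_of_isReduced cs hl]
  exact (cs.leftInvSeq l).finite_toSet

open CoxInf in
lemma ncard_invSet (x : W) : (invSet cs x).ncard = cs.length x := by
  obtain ⟨l, hl, rfl⟩ := cs.exists_reduced_word' x
  rw [invSet_eq_of_isReduced cs hl]
  have h1 : {t | t ∈ cs.leftInvSeq l} = ((cs.leftInvSeq l).toFinset : Set W) := by
    ext t; simp
  rw [h1, Set.ncard_coe_finset, List.toFinset_card_of_nodup (hl.nodup_leftInvSeq),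
    cs.length_leftInvSeq, hl]

open CoxInf in
lemma invSet_one : invSet cs (1 : W) = ∅ := by
  ext t
  simp [invSet, CoxeterSystem.IsLeftInversion]

open CoxInf in
lemma invSet_append_subset {l l' : List B} (h : cs.IsReduced (l ++ l')) :
    invSet cs (cs.wordProd l) ⊆ invSet cs (cs.wordProd (l ++ l')) := by
  have hl : cs.IsReduced l := by
    have := h.take l.length
    rwa [List.take_left] at this
  have hl' : cs.IsReduced l' := by
    have := h.drop l.length
    rwa [List.drop_left] at this
  rintro t ⟨htr, htl⟩
  refine ⟨htr, ?_⟩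
  rw [cs.wordProd_append, ← mul_assoc]
  calc cs.length (t * cs.wordProd l * cs.wordProd l')
      ≤ cs.length (t * cs.wordProd l) + cs.length (cs.wordProd l') :=
        cs.length_mul_le _ _
    _ < cs.length (cs.wordProd l) + cs.length (cs.wordProd l') := by omega
    _ = cs.length (cs.wordProd l * cs.wordProd l') := by
        rw [← cs.wordProd_append, h, hl, hl', List.length_append]

open CoxInf in
lemma invSet_take_subset {l : List B} (h : cs.IsReduced l) (n : ℕ) :
    invSet cs (cs.wordProd (l.take n)) ⊆ invSet cs (cs.wordProd l) := by
  conv_rhs => rw [← List.take_append_drop n l]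
  apply invSet_append_subset
  rw [List.take_append_drop]
  exact h

open CoxInf in
lemma mem_invSet_iff_of_descent {x : W} {c : B} (hd : cs.IsLeftDescent x c) (t : W) :
    t ∈ invSet cs x ↔ t = cs.simple c ∨
      cs.simple c * t * cs.simple c ∈ invSet cs (cs.simple c * x) := by
  obtain ⟨l, hlred, hl⟩ := cs.exists_reduced_word' (cs.simple c * x)
  have hπ : cs.wordProd (c :: l) = x := by
    rw [cs.wordProd_cons, ← hl, cs.simple_mul_simple_cancel_left]
  have hred : cs.IsReduced (c :: l) := by
    show cs.length (cs.wordProd (c :: l)) = (c :: l).length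
    rw [hπ, List.length_cons, ← hlred, ← hl]
    exact ((cs.isLeftDescent_iff).mp hd).symm
  have hstep : invSet cs x = {u | u ∈ cs.leftInvSeq (c :: l)} := by
    rw [← hπ, invSet_eq_of_isReduced cs hred]
  rw [hstep, hl, invSet_eq_of_isReduced cs hlred]
  have hlis : cs.leftInvSeq (c :: l)
      = cs.simple c :: (cs.leftInvSeq l).map (MulAut.conj (cs.simple c)) := rfl
  simp only [hlis, Set.mem_setOf_eq, List.mem_cons, List.mem_map]
  apply or_congr Iff.rfl
  constructor
  · rintro ⟨y, hy, rfl⟩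
    have : cs.simple c * ((MulAut.conj (cs.simple c)) y) * cs.simple c = y := by
      rw [MulAut.conj_apply, cs.inv_simple]
      exact (simple_conj_eq_iff cs c _ _).mpr rfl
    rwa [this]
  · intro hmem
    refine ⟨cs.simple c * t * cs.simple c, hmem, ?_⟩
    rw [MulAut.conj_apply, cs.inv_simple]
    exact (simple_conj_eq_iff cs c _ _).mpr rfl

open CoxInf in
lemma exists_extension : ∀ (n : ℕ) (a x : W), cs.length a = n →
    invSet cs a ⊆ invSet cs x → a ≠ x →
    ∃ b : B, cs.length (a * cs.simple b) = cs.length a + 1 ∧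
      invSet cs (a * cs.simple b) ⊆ invSet cs x := by
  intro n
  induction n using Nat.strong_induction_on with
  | _ n ih =>
    intro a x hn hsub hne
    by_cases ha : a = 1
    · subst ha
      obtain ⟨c, hcd⟩ := cs.exists_leftDescent_of_ne_one (fun h => hne h.symm)
      refine ⟨c, ?_, ?_⟩
      · rw [one_mul, cs.length_simple, cs.length_one]
      · rw [one_mul]
        rintro t ⟨htr, htl⟩
        rw [cs.length_simple] at htl
        have ht1 : cs.length (t * cs.simple c) = 0 := by omega
        rw [cs.length_eq_zero_iff] at ht1
        have : t = cs.simple c := by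
          have := congrArg (fun z => z * cs.simple c) ht1
          simpa [mul_assoc, cs.simple_mul_simple_self] using this
        rw [this]
        exact ⟨cs.isReflection_simple c, hcd⟩
    · obtain ⟨c, hcd⟩ := cs.exists_leftDescent_of_ne_one ha
      have hscx : cs.simple c ∈ invSet cs x :=
        hsub ((cs.isLeftInversion_simple_iff_isLeftDescent a c).mpr hcd)
      have hdx : cs.IsLeftDescent x c := (cs.isLeftInversion_simple_iff_isLeftDescent x c).mp hscx
      have hla : cs.length (cs.simple c * a) + 1 = cs.length a := (cs.isLeftDescent_iff).mp hcd
      have hlx : cs.length (cs.simple c * x) + 1 = cs.length x := (cs.isLeftDescent_iff).mp hdx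
      have hsub' : invSet cs (cs.simple c * a) ⊆ invSet cs (cs.simple c * x) := by
        intro t' ht'
        have htr' : cs.IsReflection t' := ht'.1
        have hta : cs.simple c * t' * cs.simple c ∈ invSet cs a := by
          rw [mem_invSet_iff_of_descent cs hcd]
          right
          have : cs.simple c * (cs.simple c * t' * cs.simple c) * cs.simple c = t' :=
            (simple_conj_eq_iff cs c _ _).mpr rfl
          rwa [this]
        have htx := hsub hta
        rw [mem_invSet_iff_of_descent cs hdx] at htx
        rcases htx with h1 | h2
        · exfalso
          have ht'c : t' = cs.simple c := by
            have h3 := (simple_conj_eq_iff cs c t' (cs.simple c)).mp h1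
            rwa [cs.simple_mul_simple_self, one_mul] at h3
          have : cs.length (cs.simple c * (cs.simple c * a)) < cs.length (cs.simple c * a) := by
            have := ht'.2
            rwa [ht'c] at this
          rw [cs.simple_mul_simple_cancel_left] at this
          omega
        · have : cs.simple c * (cs.simple c * t' * cs.simple c) * cs.simple c = t' :=
            (simple_conj_eq_iff cs c _ _).mpr rfl
          rwa [this] at h2
      have hne' : cs.simple c * a ≠ cs.simple c * x := fun h => hne (mul_left_cancel h)
      obtain ⟨b, hb1, hb2⟩ := ih (cs.length (cs.simple c * a)) (by omega)
        (cs.simple c * a) (cs.simple c * x) rfl hsub' hne'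
      -- `s c` is not an inversion of `s c * a * s b`
      have hscnx : cs.simple c ∉ invSet cs (cs.simple c * x) := by
        rintro ⟨-, hlt⟩
        rw [cs.simple_mul_simple_cancel_left] at hlt
        omega
      have hscnab : cs.simple c ∉ invSet cs (cs.simple c * a * cs.simple b) := fun h => hscnx (hb2 h)
      have hasb : cs.simple c * (cs.simple c * a * cs.simple b) = a * cs.simple b := by
        rw [← mul_assoc, cs.simple_mul_simple_cancel_left]
      have hlab : cs.length (a * cs.simple b) = cs.length a + 1 := by
        have hne2 := cs.length_simple_mul_ne (cs.simple c * a * cs.simple b) c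
        rw [hasb] at hne2
        have hnlt : ¬ cs.length (cs.simple c * (cs.simple c * a * cs.simple b))
            < cs.length (cs.simple c * a * cs.simple b) :=
          fun hlt => hscnab ⟨cs.isReflection_simple c, hlt⟩
        rw [hasb] at hnlt
        rcases cs.length_simple_mul (cs.simple c * a * cs.simple b) c with h | h
        · rw [hasb] at h
          omega
        · rw [hasb] at h
          omega
      refine ⟨b, hlab, ?_⟩
      have hdab : cs.IsLeftDescent (a * cs.simple b) c := by
        show cs.length (cs.simple c * (a * cs.simple b)) < cs.length (a * cs.simple b)
        have : cs.simple c * (a * cs.simple b) = cs.simple c * a * cs.simple b := by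
          rw [mul_assoc]
        rw [this, hb1, hlab]
        omega
      intro t ht
      rw [mem_invSet_iff_of_descent cs hdab] at ht
      rcases ht with h1 | h2
      · rw [h1]; exact hscx
      · rw [mem_invSet_iff_of_descent cs hdx]
        right
        apply hb2
        have : cs.simple c * (a * cs.simple b) = cs.simple c * a * cs.simple b := by
          rw [mul_assoc]
        rwa [this] at h2

open CoxInf in
lemma exists_reach : ∀ (n : ℕ) (l : List B) (x : W), cs.IsReduced l →
    invSet cs (cs.wordProd l) ⊆ invSet cs x → cs.length x - l.length ≤ n →
    ∃ l', cs.IsReduced (l ++ l') ∧ cs.wordProd (l ++ l') = x := by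
  intro n
  induction n with
  | zero =>
    intro l x hred hsub hmeas
    by_cases heq : cs.wordProd l = x
    · exact ⟨[], by simpa [List.append_nil] using ⟨hred, heq⟩⟩
    · exfalso
      obtain ⟨b, hb1, hb2⟩ := exists_extension cs (cs.length (cs.wordProd l))
        (cs.wordProd l) x rfl hsub heq
      have hcard : cs.length (cs.wordProd l * cs.simple b) ≤ cs.length x := by
        rw [← ncard_invSet cs, ← ncard_invSet cs]
        exact Set.ncard_le_ncard hb2 (invSet_finite cs x)
      rw [hb1, hred] at hcard
      omega
  | succ n ihn =>
    intro l x hred hsub hmeas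
    by_cases heq : cs.wordProd l = x
    · exact ⟨[], by simpa [List.append_nil] using ⟨hred, heq⟩⟩
    · obtain ⟨b, hb1, hb2⟩ := exists_extension cs (cs.length (cs.wordProd l))
        (cs.wordProd l) x rfl hsub heq
      have hπ : cs.wordProd (l ++ [b]) = cs.wordProd l * cs.simple b := by
        rw [cs.wordProd_append, cs.wordProd_singleton]
      have hred2 : cs.IsReduced (l ++ [b]) := by
        show cs.length (cs.wordProd (l ++ [b])) = (l ++ [b]).length
        rw [hπ, hb1, hred, List.length_append, List.length_singleton]
      have hsub2 : invSet cs (cs.wordProd (l ++ [b])) ⊆ invSet cs x := by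
        rw [hπ]; exact hb2
      have hcard : (l ++ [b]).length ≤ cs.length x := by
        rw [← hred2, ← ncard_invSet cs, ← ncard_invSet cs]
        exact Set.ncard_le_ncard hsub2 (invSet_finite cs x)
      obtain ⟨l', hl'red, hl'π⟩ := ihn (l ++ [b]) x hred2 hsub2 (by
        rw [List.length_append, List.length_singleton] at hcard ⊢
        omega)
      refine ⟨[b] ++ l', ?_, ?_⟩
      · rwa [← List.append_assoc]
      · rwa [← List.append_assoc]

open CoxInf in
lemma finite_subset_mono_iUnion {A : ℕ → Set W} (hA : Monotone A) {T : Set W}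
    (hT : T.Finite) (hsub : T ⊆ ⋃ n, A n) : ∃ n, T ⊆ A n := by
  refine Set.Finite.induction_on (motive := fun S _ => S ⊆ (⋃ n, A n) → ∃ n, S ⊆ A n) T hT
    (fun _ => ⟨0, Set.empty_subset _⟩) ?_ hsub
  intro a S _ _ ih hsub'
  obtain ⟨n1, hn1⟩ := ih ((Set.insert_subset_iff.mp hsub').2)
  obtain ⟨n2, hn2⟩ := Set.mem_iUnion.mp ((Set.insert_subset_iff.mp hsub').1)
  exact ⟨max n1 n2, Set.insert_subset_iff.mpr
    ⟨hA (le_max_right n1 n2) hn2, hn1.trans (hA (le_max_left n1 n2))⟩⟩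

open CoxInf in
lemma prefixWord_succ (ω : ℕ → B) (n : ℕ) :
    prefixWord ω (n + 1) = prefixWord ω n ++ [ω n] := by
  unfold prefixWord
  rw [List.ofFn_succ']
  simp [List.concat_eq_append]

open CoxInf in
lemma prefixWord_prefix (ω : ℕ → B) {n m : ℕ} (h : n ≤ m) :
    prefixWord ω n <+: prefixWord ω m := by
  induction h with
  | refl => exact List.prefix_refl _
  | @step m _ ih => exact ih.trans ⟨[ω m], (prefixWord_succ ω m).symm⟩

end CoxInfAux

open CoxInfAux in
open CoxInf in
/-- If `(W,S)` is a countably generated Coxeter system and `{w_i}_{i ∈ I}` is an ascending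
chain in `W̄` under the weak order, then the join `⋁_i w_i` exists in `W̄` and its inversion
set is `⋃_{i ∈ I} Φ_{w_i}`. -/
theorem chain_join_in_wbar
    {B : Type*} {W : Type*} [Group W] [Countable B] {M : CoxeterMatrix B}
    (cs : CoxeterSystem M W) {I : Type*}
    (w : I → W ⊕ {ω : ℕ → B // IsInfRedExpr cs ω})
    (hchain : ∀ i j : I, barInv cs (w i) ⊆ barInv cs (w j) ∨
      barInv cs (w j) ⊆ barInv cs (w i)) :
    ∃ v : W ⊕ {ω : ℕ → B // IsInfRedExpr cs ω},
      (∀ i, barInv cs (w i) ⊆ barInv cs v) ∧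
      (∀ u : W ⊕ {ω : ℕ → B // IsInfRedExpr cs ω},
        (∀ i, barInv cs (w i) ⊆ barInv cs u) → barInv cs v ⊆ barInv cs u) ∧
      barInv cs v = ⋃ i, barInv cs (w i) := by
  classical
  have hWcount : Countable W := cs.wordProd_surjective.countable
  set U := ⋃ i, barInv cs (w i) with hU
  suffices h : ∃ v, barInv cs v = U by
    obtain ⟨v, hv⟩ := h
    refine ⟨v, ?_, ?_, hv⟩
    · intro i; rw [hv]; exact Set.subset_iUnion (fun i => barInv cs (w i)) i
    · intro u hu; rw [hv]; exact Set.iUnion_subset hu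
  by_cases hI : Nonempty I
  swap
  · refine ⟨Sum.inl 1, ?_⟩
    have hIe : IsEmpty I := not_nonempty_iff.mp hI
    have hUe : U = ∅ := by rw [hU, Set.iUnion_of_empty]
    rw [hUe]
    exact invSet_one cs
  -- every finite subset of `U` is below one of the `w j`
  have hchainUB : ∀ T : Set W, T.Finite → T ⊆ U → ∃ j, T ⊆ barInv cs (w j) := by
    intro T hT
    refine Set.Finite.induction_on (motive := fun S _ => S ⊆ U → ∃ j, S ⊆ barInv cs (w j)) T hT
      (fun _ => ⟨Classical.arbitrary I, Set.empty_subset _⟩) ?_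
    intro a S _ _ ih hsub
    obtain ⟨j1, hj1⟩ := ih ((Set.insert_subset_iff.mp hsub).2)
    have haU : a ∈ U := (Set.insert_subset_iff.mp hsub).1
    obtain ⟨i, hai⟩ := Set.mem_iUnion.mp haU
    rcases hchain i j1 with hc | hc
    · exact ⟨j1, Set.insert_subset_iff.mpr ⟨hc hai, hj1⟩⟩
    · exact ⟨i, Set.insert_subset_iff.mpr ⟨hai, hj1.trans hc⟩⟩
  -- every finite subset of some `barInv` is inside an inversion set inside it
  have hrefine : ∀ (v0 : W ⊕ {ω : ℕ → B // IsInfRedExpr cs ω}) (T : Set W), T.Finite →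
      T ⊆ barInv cs v0 → ∃ x : W, T ⊆ invSet cs x ∧ invSet cs x ⊆ barInv cs v0 := by
    rintro (v | ⟨ω, hω⟩) T hTfin hTsub
    · exact ⟨v, hTsub, subset_rfl⟩
    · have hmono : Monotone (fun n => invSet cs (cs.wordProd (prefixWord ω n))) := by
        intro n m hnm
        obtain ⟨r, hr⟩ := prefixWord_prefix ω hnm
        dsimp only
        rw [← hr]
        exact invSet_append_subset cs (by rw [hr]; exact hω m)
      obtain ⟨n, hn⟩ := finite_subset_mono_iUnion hmono hTfin hTsub
      exact ⟨cs.wordProd (prefixWord ω n), hn,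
        Set.subset_iUnion (fun n => invSet cs (cs.wordProd (prefixWord ω n))) n⟩
  by_cases hUfin : U.Finite
  · obtain ⟨j, hj⟩ := hchainUB U hUfin subset_rfl
    exact ⟨w j, Set.Subset.antisymm (Set.subset_iUnion (fun i => barInv cs (w i)) j) hj⟩
  · -- infinite case : build an infinite reduced word
    have hUinf : Set.Infinite U := hUfin
    have hUcount : U.Countable := Set.to_countable U
    obtain ⟨f, hf⟩ := hUcount.exists_eq_range hUinf.nonempty
    set Good : List B → Prop :=
      fun l => cs.IsReduced l ∧ invSet cs (cs.wordProd l) ⊆ U with hGoodDef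
    have hGoodNil : Good [] := by
      constructor
      · show cs.length (cs.wordProd []) = ([] : List B).length
        simp
      · rw [cs.wordProd_nil, invSet_one]
        exact Set.empty_subset U
    have hstep : ∀ l, Good l → ∀ k : ℕ,
        ∃ e, Good (l ++ e) ∧ f k ∈ invSet cs (cs.wordProd (l ++ e)) := by
      intro l hGl k
      have hfkU : f k ∈ U := by rw [hf]; exact Set.mem_range_self k
      have hTfin : (insert (f k) (invSet cs (cs.wordProd l))).Finite :=
        (invSet_finite cs _).insert _
      have hTU : insert (f k) (invSet cs (cs.wordProd l)) ⊆ U :=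
        Set.insert_subset_iff.mpr ⟨hfkU, hGl.2⟩
      obtain ⟨j, hTj⟩ := hchainUB _ hTfin hTU
      obtain ⟨x, hTx, hxj⟩ := hrefine (w j) _ hTfin hTj
      have hxU : invSet cs x ⊆ U := hxj.trans (Set.subset_iUnion (fun i => barInv cs (w i)) j)
      have hlx : invSet cs (cs.wordProd l) ⊆ invSet cs x :=
        (Set.subset_insert _ _).trans hTx
      obtain ⟨e, hered, heπ⟩ := exists_reach cs (cs.length x - l.length) l x hGl.1 hlx le_rfl
      refine ⟨e, ⟨hered, ?_⟩, ?_⟩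
      · rw [heπ]; exact hxU
      · rw [heπ]; exact hTx (Set.mem_insert _ _)
    let G : ℕ → {l : List B // Good l} := fun n => Nat.rec ⟨[], hGoodNil⟩
      (fun k p => ⟨p.1 ++ (hstep p.1 p.2 k).choose, ((hstep p.1 p.2 k).choose_spec).1⟩) n
    have hGsucc : ∀ k, (G (k + 1)).1 = (G k).1 ++ (hstep (G k).1 (G k).2 k).choose :=
      fun k => rfl
    have hGpre : ∀ k, (G k).1 <+: (G (k + 1)).1 := fun k => ⟨_, (hGsucc k).symm⟩
    have hGmono : ∀ {k m}, k ≤ m → (G k).1 <+: (G m).1 := by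
      intro k m h
      induction h with
      | refl => exact List.prefix_refl _
      | step _ ih => exact ih.trans (hGpre _)
    have hGred : ∀ k, cs.IsReduced (G k).1 := fun k => (G k).2.1
    have hGU : ∀ k, invSet cs (cs.wordProd (G k).1) ⊆ U := fun k => (G k).2.2
    have hfG : ∀ k, f k ∈ invSet cs (cs.wordProd (G (k + 1)).1) := by
      intro k
      have h2 := ((hstep (G k).1 (G k).2 k).choose_spec).2
      rw [hGsucc k]
      exact h2
    have hGsub : ∀ {k m}, k ≤ m →
        invSet cs (cs.wordProd (G k).1) ⊆ invSet cs (cs.wordProd (G m).1) := by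
      intro k m h
      obtain ⟨r, hr⟩ := hGmono h
      rw [← hr]
      exact invSet_append_subset cs (by rw [hr]; exact hGred m)
    have hUG : U = ⋃ k, invSet cs (cs.wordProd (G k).1) := by
      apply Set.Subset.antisymm
      · intro u hu
        rw [hf] at hu
        obtain ⟨k, rfl⟩ := hu
        exact Set.mem_iUnion.mpr ⟨k + 1, hfG k⟩
      · exact Set.iUnion_subset hGU
    have hub : ∀ n, ∃ k, n < (G k).1.length := by
      by_contra hcon
      push_neg at hcon
      obtain ⟨n, hn⟩ := hcon
      obtain ⟨T, hTsub, hTfin, hTcard⟩ := hUinf.exists_subset_ncard_eq (n + 1)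
      have hmono : Monotone (fun k => invSet cs (cs.wordProd (G k).1)) :=
        fun k m h => hGsub h
      obtain ⟨k, hk⟩ := finite_subset_mono_iUnion hmono hTfin (by rw [← hUG]; exact hTsub)
      have hle := Set.ncard_le_ncard hk (invSet_finite cs _)
      rw [hTcard, ncard_invSet] at hle
      have h2 : cs.length (cs.wordProd (G k).1) = (G k).1.length := hGred k
      rw [h2] at hle
      have := hn k
      omega
    let K : ℕ → ℕ := fun n => (hub n).choose
    have hK : ∀ n, n < (G (K n)).1.length := fun n => (hub n).choose_spec
    let ω : ℕ → B := fun n => (G (K n)).1[n]'(hK n)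
    have hcoh : ∀ k n (h : n < (G k).1.length), (G k).1[n] = ω n := by
      intro k n h
      rcases le_total k (K n) with hle | hle
      · exact List.IsPrefix.getElem (hGmono hle) h
      · exact (List.IsPrefix.getElem (hGmono hle) (hK n)).symm
    have hpw : ∀ m k, m ≤ (G k).1.length → prefixWord ω m = (G k).1.take m := by
      intro m k h
      apply List.ext_getElem
      · rw [List.length_take]
        unfold prefixWord
        rw [List.length_ofFn]
        omega
      · intro i h1 h2
        rw [List.getElem_take]
        unfold prefixWord at h1 ⊢
        rw [List.getElem_ofFn]
        exact (hcoh k i (by rw [List.length_take] at h2; omega)).symm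
    have hinf : IsInfRedExpr cs ω := by
      intro n
      rw [hpw n (K n) (le_of_lt (hK n))]
      exact (hGred (K n)).take n
    refine ⟨Sum.inr ⟨ω, hinf⟩, ?_⟩
    show (⋃ n, invSet cs (cs.wordProd (prefixWord ω n))) = U
    apply Set.Subset.antisymm
    · apply Set.iUnion_subset
      intro n
      rw [hpw n (K n) (le_of_lt (hK n))]
      exact (invSet_take_subset cs (hGred (K n)) n).trans (hGU (K n))
    · rw [hUG]
      apply Set.iUnion_subset
      intro k
      intro t ht
      have hpwk : prefixWord ω ((G k).1.length) = (G k).1 := by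
        rw [hpw _ k le_rfl, List.take_length]
      exact Set.mem_iUnion.mpr ⟨(G k).1.length, by rw [hpwk]; exact ht⟩
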